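/- (Lemma 1) Let (Ω, ℱ, ℙ) be a probability space and X : Ω → ℝ a random variable with bounded support whose essential supremum is x*. Let m : (0,1) → ℝ be such that for each τ ∈ (0,1), m(τ) is a τ-expectile of X. Then m(τ) tends to x* as τ tends to 1 from the left. -/

import Mathlib

open MeasureTheory Filter

private lemma integrable_max_zero {Ω : Type*} [MeasurableSpace Ω] (P : Measure Ω)
    [IsFiniteMeasure P] {f : Ω → ℝ} (hf : Measurable f) {D : ℝ}
    (hD : ∀ᵐ ω ∂P, |f ω| ≤ D) :
    Integrable (fun ω => max (f ω) 0) P := by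
  refine Integrable.mono' (integrable_const D) ?_ ?_
  · exact (hf.max measurable_const).aestronglyMeasurable
  · filter_upwards [hD] with ω hω
    rw [Real.norm_eq_abs, abs_of_nonneg (le_max_right _ _)]
    have h1 := (abs_le.1 hω).2
    have h0 : (0:ℝ) ≤ D := (abs_nonneg _).trans hω
    exact max_le h1 h0

/-- Lemma 1: For a probability space and a bounded-support random
variable `X` with essential supremum `x* = essSup X P`, if `m τ` is a
`τ`-expectile of `X` for each `τ ∈ (0,1)`, then `m τ → x*` as `τ → 1⁻`. -/
theorem expectile_tendsto_essSup
    {Ω : Type*} [MeasurableSpace Ω] (P : Measure Ω) [IsProbabilityMeasure P]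
    (X : Ω → ℝ) (hX : Measurable X) (hbdd : ∃ C : ℝ, ∀ᵐ ω ∂P, |X ω| ≤ C)
    (m : ℝ → ℝ)
    (hm : ∀ τ ∈ Set.Ioo (0 : ℝ) 1,
      τ * ∫ ω, max (X ω - m τ) 0 ∂P = (1 - τ) * ∫ ω, max (m τ - X ω) 0 ∂P) :
    Tendsto m (nhdsWithin 1 (Set.Iio 1)) (nhds (essSup X P)) := by
  obtain ⟨C₀, hC₀⟩ := hbdd
  set C := |C₀| with hCdef
  have hCnn : (0:ℝ) ≤ C := abs_nonneg _
  have hC : ∀ᵐ ω ∂P, |X ω| ≤ C := hC₀.mono fun ω h => h.trans (le_abs_self _)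
  set s := essSup X P with hs
  have hne : (ae P).NeBot := ae_neBot.mpr (IsProbabilityMeasure.ne_zero P)
  have hbddU : IsBoundedUnder (· ≤ ·) (ae P) X := ⟨C, hC.mono fun ω h => (abs_le.1 h).2⟩
  have hbddL : IsBoundedUnder (· ≥ ·) (ae P) X := ⟨-C, hC.mono fun ω h => (abs_le.1 h).1⟩
  have hXles : ∀ᵐ ω ∂P, X ω ≤ s := ae_le_essSup hbddU
  have hslim : s = limsup X (ae P) := rfl
  -- positivity of upper-tail probabilities
  have key : ∀ c < s, P {ω | c < X ω} ≠ 0 := by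
    intro c hc h0
    have hae : ∀ᵐ ω ∂P, X ω ≤ c := by
      rw [ae_iff]; simpa [not_le] using h0
    have : s ≤ c := by
      rw [hslim]
      exact limsup_le_of_le hbddL.isCoboundedUnder_le hae
    exact absurd hc (not_lt.mpr this)
  -- integrability
  have intX : ∀ a : ℝ, Integrable (fun ω => max (X ω - a) 0) P := by
    intro a
    refine integrable_max_zero P (hX.sub measurable_const) (D := C + |a|) ?_
    filter_upwards [hC] with ω hω
    calc |X ω - a| ≤ |X ω| + |a| := abs_sub _ _
      _ ≤ C + |a| := by linarith
  have intX' : ∀ a : ℝ, Integrable (fun ω => max (a - X ω) 0) P := by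
    intro a
    refine integrable_max_zero P (measurable_const.sub hX) (D := C + |a|) ?_
    filter_upwards [hC] with ω hω
    calc |a - X ω| ≤ |a| + |X ω| := abs_sub _ _
      _ ≤ C + |a| := by linarith
  -- m τ ≤ s on (0,1)
  have hms : ∀ τ ∈ Set.Ioo (0:ℝ) 1, m τ ≤ s := by
    intro τ hτ
    by_contra hlt
    push_neg at hlt
    have h1 : (fun ω => max (X ω - m τ) 0) =ᵐ[P] fun _ => 0 := by
      filter_upwards [hXles] with ω h
      exact max_eq_right (by linarith)
    have heq := hm τ hτ
    rw [integral_congr_ae h1, integral_zero, mul_zero] at heq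
    have h3 : ∫ ω, max (m τ - X ω) 0 ∂P = 0 := by
      rcases mul_eq_zero.mp heq.symm with h | h
      · exfalso; linarith [hτ.2]
      · exact h
    have h4 : m τ - s ≤ ∫ ω, max (m τ - X ω) 0 ∂P := by
      have hmono : ∫ _ω, (m τ - s) ∂P ≤ ∫ ω, max (m τ - X ω) 0 ∂P := by
        refine integral_mono_ae (integrable_const _) (intX' (m τ)) ?_
        filter_upwards [hXles] with ω h
        exact le_trans (by linarith) (le_max_left _ _)
      simpa using hmono
    linarith
  -- the limit
  rw [Metric.tendsto_nhds]
  intro ε hε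
  obtain ⟨c, hcdef⟩ : ∃ c : ℝ, c = s - ε/2 := ⟨_, rfl⟩
  have hp : P {ω | c < X ω} ≠ 0 := key c (by rw [hcdef]; linarith)
  obtain ⟨p, hpdef⟩ : ∃ p : ℝ, p = (P {ω | c < X ω}).toReal := ⟨_, rfl⟩
  have hp0 : 0 < p := hpdef ▸ ENNReal.toReal_pos hp (measure_ne_top _ _)
  obtain ⟨M, hMdef⟩ : ∃ M : ℝ, M = |s| + C + 1 := ⟨_, rfl⟩
  have hM : 0 < M := by rw [hMdef]; positivity
  have hev1 : ∀ᶠ τ in nhdsWithin (1:ℝ) (Set.Iio 1), τ ∈ Set.Ioo (0:ℝ) 1 :=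
    Ioo_mem_nhdsLT_of_mem (by norm_num : (1:ℝ) ∈ Set.Ioc (0:ℝ) 1)
  have hev2 : ∀ᶠ τ in nhdsWithin (1:ℝ) (Set.Iio 1), (1 - τ) * M < τ * (ε/2 * p) := by
    have hL : Tendsto (fun τ : ℝ => (1 - τ) * M) (nhdsWithin 1 (Set.Iio 1)) (nhds 0) := by
      have hcont : Tendsto (fun τ : ℝ => (1 - τ) * M) (nhds 1) (nhds ((1-1)*M)) :=
        ((continuous_const.sub continuous_id).mul continuous_const).tendsto 1
      simpa using hcont.mono_left nhdsWithin_le_nhds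
    have hR : Tendsto (fun τ : ℝ => τ * (ε/2 * p)) (nhdsWithin 1 (Set.Iio 1))
        (nhds (1 * (ε/2 * p))) :=
      ((continuous_id.mul continuous_const).tendsto 1).mono_left nhdsWithin_le_nhds
    exact hL.eventually_lt hR (by rw [one_mul]; positivity)
  filter_upwards [hev1, hev2] with τ hτ hlt
  have hle := hms τ hτ
  rw [Real.dist_eq, abs_lt]
  refine ⟨?_, by linarith⟩
  by_contra hcon
  push_neg at hcon
  -- so m τ ≤ s - ε
  have hmτ : m τ ≤ s - ε := by linarith
  have hlow : ε/2 * p ≤ ∫ ω, max (X ω - m τ) 0 ∂P := by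
    have hmeas : MeasurableSet {ω | c < X ω} := hX measurableSet_Ioi
    have hind : ∫ ω, Set.indicator {ω | c < X ω} (fun _ => ε/2) ω ∂P
        ≤ ∫ ω, max (X ω - m τ) 0 ∂P := by
      refine integral_mono ((integrable_const (ε/2)).indicator hmeas) (intX _) ?_
      intro ω
      by_cases hω : c < X ω
      · rw [Set.indicator_of_mem (show ω ∈ {ω | c < X ω} from hω)]
        refine le_trans ?_ (le_max_left _ _)
        rw [hcdef] at hω
        linarith
      · rw [Set.indicator_of_notMem (show ω ∉ {ω | c < X ω} from hω)]
        exact le_max_right _ _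
    rwa [integral_indicator_const _ hmeas, smul_eq_mul, mul_comm, measureReal_def, ← hpdef] at hind
  have hup : ∫ ω, max (m τ - X ω) 0 ∂P ≤ M := by
    have hmono : ∫ ω, max (m τ - X ω) 0 ∂P ≤ ∫ _ω, M ∂P := by
      refine integral_mono_ae (intX' _) (integrable_const _) ?_
      filter_upwards [hC] with ω hω
      have h1 : -C ≤ X ω := (abs_le.1 hω).1
      have h2 : s ≤ |s| := le_abs_self _
      exact max_le (by rw [hMdef]; linarith) (by rw [hMdef]; linarith)
    simpa using hmono
  have heq := hm τ hτ
  have h1 : τ * (ε/2 * p) ≤ τ * ∫ ω, max (X ω - m τ) 0 ∂P :=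
    mul_le_mul_of_nonneg_left hlow (le_of_lt hτ.1)
  have h2 : (1-τ) * ∫ ω, max (m τ - X ω) 0 ∂P ≤ (1-τ) * M :=
    mul_le_mul_of_nonneg_left hup (by linarith [hτ.2])
  linarith
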